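/- Under the same Bernoulli sampling model with ρ,κ ∈ (0,1), ρ+κ > 1 and 3ρ+4κ < 4, for every ε > 0, P(max_{s} max_{j≠s} (ZᵀZ)_{sj} ≤ (Υ²+ε)S^{2−ρ−2κ}) → 1 and P(min_s min_{j≠s} (ZᵀZ)_{sj} ≥ (1−ε)S^{2−ρ−2κ}) → 1 as S → ∞. -/

import Mathlib

open MeasureTheory Filter ProbabilityTheory Real

section AuxStmt13

variable {Ω : Type} [MeasurableSpace Ω] {μ : Measure Ω} [IsProbabilityMeasure μ]

private lemma stmt13_meas_ite01 (b : Ω → Bool) (hb : Measurable b) :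
    Measurable (fun ω => if b ω then (1:ℝ) else 0) :=
  (measurable_of_countable (fun x : Bool => if x then (1:ℝ) else 0)).comp hb

private lemma stmt13_mgf_bool (b : Ω → Bool) (hb : Measurable b) (t : ℝ) :
    mgf (fun ω => if b ω then (1:ℝ) else 0) μ t
      = 1 + (μ {ω | b ω = true}).toReal * (exp t - 1) := by
  have hset : MeasurableSet {ω | b ω = true} := hb (MeasurableSet.singleton true)
  have h1 : (fun ω => exp (t * (if b ω then (1:ℝ) else 0)))
      = fun ω => 1 + (exp t - 1) * ({ω | b ω = true}.indicator (1 : Ω → ℝ) ω) := by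
    funext ω; by_cases h : b ω <;> simp [h, Set.indicator, Set.mem_setOf_eq]
  rw [mgf, h1]
  have hint : Integrable
      (fun ω => (exp t - 1) * ({ω | b ω = true}.indicator (1 : Ω → ℝ) ω)) μ := by
    exact (((integrable_const (1:ℝ)).indicator hset).const_mul _)
  rw [integral_add (f := fun _ => (1:ℝ))
      (g := fun ω => (exp t - 1) * ({ω | b ω = true}.indicator (1 : Ω → ℝ) ω))
      (integrable_const 1) hint]
  rw [integral_const_mul, integral_const, integral_indicator_one hset]
  simp [mul_comm, Measure.real]

private lemma stmt13_mgf_sum_prod {R C : ℕ} (Z : Fin R → Fin C → Ω → Bool)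
    (hmeas : ∀ i j, Measurable (Z i j))
    (hind : iIndepFun (fun (p : Fin R × Fin C) ω => Z p.1 p.2 ω) μ)
    (j s : Fin C) (F : Finset (Fin R)) (t : ℝ) :
    mgf (fun ω => ∑ i ∈ F, (if Z i j ω then (1:ℝ) else 0) * (if Z i s ω then (1:ℝ) else 0)) μ t
      = ∏ i ∈ F, mgf (fun ω => (if Z i j ω then (1:ℝ) else 0) * (if Z i s ω then (1:ℝ) else 0)) μ t := by
  classical
  induction F using Finset.induction_on with
  | empty => simp [mgf_zero_fun]
  | @insert i F hiF ih =>
    have hWmeas : ∀ i' : Fin R, Measurable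
        (fun ω => (if Z i' j ω then (1:ℝ) else 0) * (if Z i' s ω then (1:ℝ) else 0)) :=
      fun i' => (stmt13_meas_ite01 _ (hmeas i' j)).mul (stmt13_meas_ite01 _ (hmeas i' s))
    set S₁ : Finset (Fin R × Fin C) := {i} ×ˢ ({j, s} : Finset (Fin C)) with hS₁
    set S₂ : Finset (Fin R × Fin C) := F ×ˢ ({j, s} : Finset (Fin C)) with hS₂
    have hdisj : Disjoint S₁ S₂ := by
      rw [Finset.disjoint_left]
      rintro ⟨a, b⟩ h1 h2
      rw [hS₁, Finset.mem_product, Finset.mem_singleton] at h1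
      rw [hS₂, Finset.mem_product] at h2
      exact hiF (h1.1 ▸ h2.1)
    have hIF := hind.indepFun_finset S₁ S₂ hdisj (fun p => hmeas p.1 p.2)
    have hm1 : ((i, j) : Fin R × Fin C) ∈ S₁ := by simp [hS₁]
    have hm1' : ((i, s) : Fin R × Fin C) ∈ S₁ := by simp [hS₁]
    set φ : (↥S₁ → Bool) → ℝ := fun g =>
      (if g ⟨(i, j), hm1⟩ then (1:ℝ) else 0) * (if g ⟨(i, s), hm1'⟩ then (1:ℝ) else 0) with hφ
    set ψ : (↥S₂ → Bool) → ℝ := fun g =>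
      ∑ i' ∈ F.attach, (if g ⟨(i'.1, j), by
          rw [hS₂, Finset.mem_product]; exact ⟨i'.2, by simp⟩⟩ then (1:ℝ) else 0)
        * (if g ⟨(i'.1, s), by
          rw [hS₂, Finset.mem_product]; exact ⟨i'.2, by simp⟩⟩ then (1:ℝ) else 0) with hψ
    have hcomp := hIF.comp (φ := φ) (ψ := ψ) (measurable_of_countable φ) (measurable_of_countable ψ)
    have hIndep : IndepFun
        (fun ω => (if Z i j ω then (1:ℝ) else 0) * (if Z i s ω then (1:ℝ) else 0))
        (fun ω => ∑ i' ∈ F, (if Z i' j ω then (1:ℝ) else 0) * (if Z i' s ω then (1:ℝ) else 0)) μ := by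
      convert hcomp using 1
      · funext ω; rfl
      funext ω
      show _ = ψ (fun p : ↥S₂ => Z p.1.1 p.1.2 ω)
      rw [hψ]
      simp only
      rw [← Finset.sum_attach F
        (fun i' => (if Z i' j ω then (1:ℝ) else 0) * (if Z i' s ω then (1:ℝ) else 0))]
    have hsum : (fun ω => ∑ i' ∈ insert i F,
          (if Z i' j ω then (1:ℝ) else 0) * (if Z i' s ω then (1:ℝ) else 0))
        = (fun ω => (if Z i j ω then (1:ℝ) else 0) * (if Z i s ω then (1:ℝ) else 0))
          + (fun ω => ∑ i' ∈ F, (if Z i' j ω then (1:ℝ) else 0) * (if Z i' s ω then (1:ℝ) else 0)) := by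
      funext ω; simp [Finset.sum_insert hiF]
    rw [hsum, hIndep.mgf_add' (hWmeas i).aestronglyMeasurable
        (by exact (Finset.measurable_sum F (fun i' _ => hWmeas i')).aestronglyMeasurable),
      ih, Finset.prod_insert hiF]

private lemma stmt13_mgf_W {R C : ℕ} (Z : Fin R → Fin C → Ω → Bool)
    (hmeas : ∀ i j, Measurable (Z i j))
    (hind : iIndepFun (fun (p : Fin R × Fin C) ω => Z p.1 p.2 ω) μ)
    (j s : Fin C) (hjs : j ≠ s) (i : Fin R) (t : ℝ) :
    mgf (fun ω => (if Z i j ω then (1:ℝ) else 0) * (if Z i s ω then (1:ℝ) else 0)) μ t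
      = 1 + (μ {ω | Z i j ω = true}).toReal * (μ {ω | Z i s ω = true}).toReal * (exp t - 1) := by
  have hb : Measurable (fun ω => Z i j ω && Z i s ω) :=
    (measurable_of_countable (fun p : Bool × Bool => p.1 && p.2)).comp
      ((hmeas i j).prodMk (hmeas i s))
  have h1 : (fun ω => (if Z i j ω then (1:ℝ) else 0) * (if Z i s ω then (1:ℝ) else 0))
      = fun ω => if (Z i j ω && Z i s ω) then (1:ℝ) else 0 := by
    funext ω; by_cases h1 : Z i j ω <;> by_cases h2 : Z i s ω <;> simp [h1, h2]
  rw [h1, stmt13_mgf_bool _ hb]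
  have hset : {ω | (Z i j ω && Z i s ω) = true}
      = (fun ω => Z i j ω) ⁻¹' {true} ∩ (fun ω => Z i s ω) ⁻¹' {true} := by
    ext ω; simp [Bool.and_eq_true]
  have hne : ((i, j) : Fin R × Fin C) ≠ (i, s) := by
    simp only [ne_eq, Prod.mk.injEq, not_and]; exact fun _ => hjs
  have hfac := (hind.indepFun hne).measure_inter_preimage_eq_mul {true} {true}
    (MeasurableSet.singleton true) (MeasurableSet.singleton true)
  rw [hset]
  rw [hfac, ENNReal.toReal_mul]
  rfl

private lemma stmt13_prob_toReal_le_one (A : Set Ω) : (μ A).toReal ≤ 1 := by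
  have h := measure_mono (μ := μ) (Set.subset_univ A)
  rw [measure_univ] at h
  calc (μ A).toReal ≤ (1 : ENNReal).toReal := ENNReal.toReal_mono (by simp) h
    _ = 1 := by simp

private lemma stmt13_chernoff_pair {R C : ℕ} (Z : Fin R → Fin C → Ω → Bool)
    (hmeas : ∀ i j, Measurable (Z i j))
    (hind : iIndepFun (fun (p : Fin R × Fin C) ω => Z p.1 p.2 ω) μ)
    (j s : Fin C) (hjs : j ≠ s) (t : ℝ) :
    mgf (fun ω => ∑ i, (if Z i j ω then (1:ℝ) else 0) * (if Z i s ω then (1:ℝ) else 0)) μ t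
      ≤ exp ((∑ i : Fin R, (μ {ω | Z i j ω = true}).toReal * (μ {ω | Z i s ω = true}).toReal)
          * (exp t - 1)) := by
  rw [stmt13_mgf_sum_prod Z hmeas hind j s Finset.univ t]
  rw [Finset.sum_mul, Real.exp_sum]
  apply Finset.prod_le_prod
  · intro i _
    rw [stmt13_mgf_W Z hmeas hind j s hjs i t]
    set q := (μ {ω | Z i j ω = true}).toReal * (μ {ω | Z i s ω = true}).toReal with hq
    have hq0 : 0 ≤ q := mul_nonneg ENNReal.toReal_nonneg ENNReal.toReal_nonneg
    have hq1 : q ≤ 1 := by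
      calc q ≤ 1 * 1 := by
              apply mul_le_mul (stmt13_prob_toReal_le_one _) (stmt13_prob_toReal_le_one _)
                ENNReal.toReal_nonneg zero_le_one
        _ = 1 := one_mul 1
    rcases le_or_gt 0 (exp t - 1) with h | h
    · positivity
    · nlinarith [Real.exp_pos t]
  · intro i _
    rw [stmt13_mgf_W Z hmeas hind j s hjs i t]
    have := Real.add_one_le_exp ((μ {ω | Z i j ω = true}).toReal
      * (μ {ω | Z i s ω = true}).toReal * (exp t - 1))
    linarith

private lemma stmt13_integrable_exp_T {R C : ℕ} (Z : Fin R → Fin C → Ω → Bool)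
    (hmeas : ∀ i j, Measurable (Z i j)) (j s : Fin C) (t : ℝ) :
    Integrable (fun ω => exp (t * ∑ i, (if Z i j ω then (1:ℝ) else 0) * (if Z i s ω then (1:ℝ) else 0))) μ := by
  have hTmeas : Measurable (fun ω => ∑ i : Fin R,
      (if Z i j ω then (1:ℝ) else 0) * (if Z i s ω then (1:ℝ) else 0)) :=
    Finset.measurable_sum _ (fun i _ => (stmt13_meas_ite01 _ (hmeas i j)).mul (stmt13_meas_ite01 _ (hmeas i s)))
  refine Integrable.mono' (integrable_const (exp (|t| * R)))
    (((hTmeas.const_mul t).exp).aestronglyMeasurable) (ae_of_all _ fun ω => ?_)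
  have hT0 : 0 ≤ ∑ i : Fin R, (if Z i j ω then (1:ℝ) else 0) * (if Z i s ω then (1:ℝ) else 0) :=
    Finset.sum_nonneg fun i _ => by positivity
  have hTR : (∑ i : Fin R, (if Z i j ω then (1:ℝ) else 0) * (if Z i s ω then (1:ℝ) else 0)) ≤ R := by
    calc (∑ i : Fin R, (if Z i j ω then (1:ℝ) else 0) * (if Z i s ω then (1:ℝ) else 0))
        ≤ ∑ _i : Fin R, (1:ℝ) := Finset.sum_le_sum (fun i _ => by
          by_cases h1 : Z i j ω <;> by_cases h2 : Z i s ω <;> simp [h1, h2])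
      _ = R := by simp
  rw [Real.norm_eq_abs, Real.abs_exp]
  apply Real.exp_le_exp.mpr
  calc t * _ ≤ |t| * _ := mul_le_mul_of_nonneg_right (le_abs_self t) hT0
    _ ≤ |t| * R := mul_le_mul_of_nonneg_left hTR (abs_nonneg t)

private lemma stmt13_pair_upper {R C : ℕ} (Z : Fin R → Fin C → Ω → Bool)
    (hmeas : ∀ i j, Measurable (Z i j))
    (hind : iIndepFun (fun (p : Fin R × Fin C) ω => Z p.1 p.2 ω) μ)
    (j s : Fin C) (hjs : j ≠ s) (t a : ℝ) (ht : 0 ≤ t) :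
    (μ {ω | a ≤ ∑ i, (if Z i j ω then (1:ℝ) else 0) * (if Z i s ω then (1:ℝ) else 0)}).toReal
      ≤ exp (-(t * a) +
        (∑ i : Fin R, (μ {ω | Z i j ω = true}).toReal * (μ {ω | Z i s ω = true}).toReal)
          * (exp t - 1)) := by
  have h1 := measure_ge_le_exp_mul_mgf (μ := μ)
    (X := fun ω => ∑ i, (if Z i j ω then (1:ℝ) else 0) * (if Z i s ω then (1:ℝ) else 0)) a ht
    (stmt13_integrable_exp_T Z hmeas j s t)
  refine h1.trans ?_
  rw [Real.exp_add]
  rw [neg_mul t a] at *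
  exact mul_le_mul_of_nonneg_left (stmt13_chernoff_pair Z hmeas hind j s hjs t) (exp_pos _).le

private lemma stmt13_pair_lower {R C : ℕ} (Z : Fin R → Fin C → Ω → Bool)
    (hmeas : ∀ i j, Measurable (Z i j))
    (hind : iIndepFun (fun (p : Fin R × Fin C) ω => Z p.1 p.2 ω) μ)
    (j s : Fin C) (hjs : j ≠ s) (t a : ℝ) (ht : t ≤ 0) :
    (μ {ω | (∑ i, (if Z i j ω then (1:ℝ) else 0) * (if Z i s ω then (1:ℝ) else 0)) ≤ a}).toReal
      ≤ exp (-(t * a) +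
        (∑ i : Fin R, (μ {ω | Z i j ω = true}).toReal * (μ {ω | Z i s ω = true}).toReal)
          * (exp t - 1)) := by
  have h1 := measure_le_le_exp_mul_mgf (μ := μ)
    (X := fun ω => ∑ i, (if Z i j ω then (1:ℝ) else 0) * (if Z i s ω then (1:ℝ) else 0)) a ht
    (stmt13_integrable_exp_T Z hmeas j s t)
  refine h1.trans ?_
  rw [Real.exp_add]
  rw [neg_mul t a] at *
  exact mul_le_mul_of_nonneg_left (stmt13_chernoff_pair Z hmeas hind j s hjs t) (exp_pos _).le

private lemma stmt13_exp_ineq1 {t : ℝ} (ht0 : 0 ≤ t) (ht1 : t < 1) : exp t - 1 ≤ t / (1 - t) := by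
  have h1 : 1 - t ≤ exp (-t) := by linarith [add_one_le_exp (-t)]
  have hmul : exp t * exp (-t) = 1 := by rw [← Real.exp_add]; simp
  have hpos : (0:ℝ) < 1 - t := by linarith
  rw [le_div_iff₀ hpos]
  nlinarith [exp_pos t]

private lemma stmt13_exp_ineq2 {u : ℝ} (hu : 0 ≤ u) : exp (-u) - 1 ≤ -u + u^2 := by
  have h1 : u + 1 ≤ exp u := add_one_le_exp u
  have h2 : 1 - u ≤ exp (-u) := by linarith [add_one_le_exp (-u)]
  have hmul : exp u * exp (-u) = 1 := by rw [← Real.exp_add]; simp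
  nlinarith [exp_pos (-u), exp_pos u, mul_nonneg hu (exp_pos (-u)).le]

end AuxStmt13

private lemma stmt13_union_bound_tendsto
    (Ω : ℕ → Type) [∀ S, MeasurableSpace (Ω S)]
    (μ : ∀ S, Measure (Ω S)) [∀ S, IsProbabilityMeasure (μ S)]
    (C : ℕ → ℕ) (κ : ℝ) (hκ1 : κ ≤ 1)
    (hCle : ∀ᶠ S : ℕ in atTop, (C S : ℝ) ≤ (S:ℝ)^κ + 1)
    (α β c₀ : ℝ) (hα : 0 < α) (hβ : 0 < β) (hc₀ : 0 ≤ c₀)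
    (G : ∀ S, Set (Ω S)) (V : ∀ S, Fin (C S) → Fin (C S) → Set (Ω S))
    (hGV : ∀ S, ∀ ω, ω ∉ G S → ∃ s j : Fin (C S), j ≠ s ∧ ω ∈ V S s j)
    (hV : ∀ᶠ S : ℕ in atTop, ∀ s j : Fin (C S), j ≠ s →
      (μ S (V S s j)).toReal ≤ c₀ * Real.exp (-(β * (S:ℝ)^α))) :
    Tendsto (fun S => μ S (G S)) atTop (nhds 1) := by
  set b : ℕ → ℝ := fun S => c₀ * Real.exp (-(β * (S:ℝ)^α)) with hb
  have hb0 : ∀ S, 0 ≤ b S := fun S => mul_nonneg hc₀ (exp_pos _).le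
  have key : ∀ᶠ S : ℕ in atTop,
      1 - ((S:ℝ)^κ + 1)^2 * b S ≤ (μ S (G S)).toReal := by
    filter_upwards [hCle, hV] with S hCS hVS
    set E : Fin (C S) × Fin (C S) → Set (Ω S) :=
      fun p => {ω | p.2 ≠ p.1 ∧ ω ∈ V S p.1 p.2} with hE
    have hsub : (G S)ᶜ ⊆ ⋃ p, E p := by
      intro ω hω
      obtain ⟨s, j, hjs, hmem⟩ := hGV S ω hω
      exact Set.mem_iUnion.mpr ⟨(s, j), hjs, hmem⟩
    have h1 : μ S (G S)ᶜ ≤ ∑ p : Fin (C S) × Fin (C S), μ S (E p) :=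
      (measure_mono hsub).trans (measure_iUnion_fintype_le _ _)
    have h2 : (μ S (G S)ᶜ).toReal ≤ ((C S : ℝ))^2 * b S := by
      have hne : (∑ p : Fin (C S) × Fin (C S), μ S (E p)) ≠ ⊤ := by
        refine (ENNReal.sum_lt_top.mpr fun p _ => measure_lt_top _ _).ne
      calc (μ S (G S)ᶜ).toReal ≤ (∑ p : Fin (C S) × Fin (C S), μ S (E p)).toReal :=
            ENNReal.toReal_mono hne h1
        _ = ∑ p : Fin (C S) × Fin (C S), (μ S (E p)).toReal :=
            ENNReal.toReal_sum (fun p _ => (measure_lt_top _ _).ne)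
        _ ≤ ∑ _p : Fin (C S) × Fin (C S), b S := by
            refine Finset.sum_le_sum fun p _ => ?_
            by_cases hp : p.2 ≠ p.1
            · refine le_trans (ENNReal.toReal_mono (measure_lt_top _ _).ne
                (measure_mono ?_)) (hVS p.1 p.2 hp)
              intro ω hω; exact hω.2
            · have : E p = ∅ := by
                ext ω; simp only [hE, Set.mem_setOf_eq, Set.mem_empty_iff_false, iff_false]
                intro h; exact hp h.1
              rw [this]; simpa using hb0 S
        _ = ((C S : ℝ))^2 * b S := by
            rw [Finset.sum_const]
            simp only [Finset.card_univ, Fintype.card_prod, Fintype.card_fin, nsmul_eq_mul,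
              Nat.cast_mul]
            ring
    have h3 : (1:ℝ) ≤ (μ S (G S)).toReal + (μ S (G S)ᶜ).toReal := by
      have hu := measure_union_le (μ := μ S) (G S) (G S)ᶜ
      rw [Set.union_compl_self, measure_univ] at hu
      have h5 := ENNReal.toReal_mono
        (by exact (ENNReal.add_lt_top.mpr ⟨measure_lt_top _ _, measure_lt_top _ _⟩).ne) hu
      rwa [ENNReal.toReal_one, ENNReal.toReal_add (measure_lt_top _ _).ne
        (measure_lt_top _ _).ne] at h5
    have h4 : ((C S : ℝ))^2 * b S ≤ ((S:ℝ)^κ + 1)^2 * b S := by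
      have hC0 : (0:ℝ) ≤ (C S : ℝ) := Nat.cast_nonneg _
      have : ((C S : ℝ))^2 ≤ ((S:ℝ)^κ + 1)^2 := by nlinarith
      exact mul_le_mul_of_nonneg_right this (hb0 S)
    linarith
  have hzero : Tendsto (fun S : ℕ => ((S:ℝ)^κ + 1)^2 * b S) atTop (nhds 0) := by
    set n : ℕ := ⌈2/α⌉₊ with hn
    have hαn : 2 ≤ α * n := by
      have h1 : 2/α ≤ (n:ℝ) := Nat.le_ceil _
      calc (2:ℝ) = α * (2/α) := by field_simp
        _ ≤ α * n := mul_le_mul_of_nonneg_left h1 hα.le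
    have hy : Tendsto (fun S : ℕ => β * (S:ℝ)^α) atTop atTop := by
      apply Tendsto.const_mul_atTop hβ
      exact (tendsto_rpow_atTop hα).comp tendsto_natCast_atTop_atTop
    have hyz : Tendsto (fun S : ℕ => (β * (S:ℝ)^α)^n * Real.exp (-(β * (S:ℝ)^α)))
        atTop (nhds 0) := by
      have := (tendsto_pow_mul_exp_neg_atTop_nhds_zero n).comp hy
      exact this
    have hbig : Tendsto (fun S : ℕ => (4 * c₀ * (1/β)^n) *
        ((β * (S:ℝ)^α)^n * Real.exp (-(β * (S:ℝ)^α)))) atTop (nhds 0) := by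
      simpa using hyz.const_mul (4 * c₀ * (1/β)^n)
    refine tendsto_of_tendsto_of_tendsto_of_le_of_le' tendsto_const_nhds hbig ?_ ?_
    · filter_upwards with S
      positivity
    · filter_upwards [eventually_ge_atTop 1] with S hS1
      have hS1' : (1:ℝ) ≤ (S:ℝ) := by exact_mod_cast hS1
      have hS0 : (0:ℝ) ≤ (S:ℝ) := by linarith
      have hk : (S:ℝ)^κ ≤ (S:ℝ) := by
        calc (S:ℝ)^κ ≤ (S:ℝ)^(1:ℝ) := Real.rpow_le_rpow_of_exponent_le hS1' hκ1
          _ = (S:ℝ) := Real.rpow_one _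
      have hsq : ((S:ℝ)^κ + 1)^2 ≤ 4 * (S:ℝ)^(2:ℕ) := by
        have h2 : (S:ℝ)^κ + 1 ≤ 2 * (S:ℝ) := by linarith
        have h0 : (0:ℝ) ≤ (S:ℝ)^κ + 1 := by positivity
        nlinarith
      have hpow : (S:ℝ)^(2:ℕ) ≤ (1/β)^n * (β * (S:ℝ)^α)^n := by
        have e1 : (S:ℝ)^(2:ℕ) = (S:ℝ)^((2:ℕ):ℝ) := (Real.rpow_natCast _ _).symm
        have e2 : (S:ℝ)^((2:ℕ):ℝ) ≤ (S:ℝ)^(α * n) := by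
          apply Real.rpow_le_rpow_of_exponent_le hS1'
          simpa using hαn
        have e3 : (S:ℝ)^(α * n) = ((S:ℝ)^α)^n := by
          rw [Real.rpow_mul hS0, Real.rpow_natCast]
        have e4 : (1/β)^n * (β * (S:ℝ)^α)^n = ((S:ℝ)^α)^n := by
          rw [← mul_pow]
          congr 1
          field_simp
        rw [e4, e1]
        rw [e3] at e2
        exact e2
      calc ((S:ℝ)^κ + 1)^2 * b S ≤ (4 * (S:ℝ)^(2:ℕ)) * b S := by
            apply mul_le_mul_of_nonneg_right hsq (hb0 S)
        _ ≤ (4 * ((1/β)^n * (β * (S:ℝ)^α)^n)) * b S := by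
            have := mul_le_mul_of_nonneg_left hpow (by norm_num : (0:ℝ) ≤ 4)
            exact mul_le_mul_of_nonneg_right this (hb0 S)
        _ ≤ (4 * c₀ * (1/β)^n) * ((β * (S:ℝ)^α)^n * Real.exp (-(β * (S:ℝ)^α))) := by
            rw [hb]
            ring_nf
            nlinarith [pow_nonneg (mul_nonneg hβ.le (Real.rpow_nonneg hS0 α)) n,
              (exp_pos (-(β * (S:ℝ)^α))).le, pow_nonneg (by positivity : (0:ℝ) ≤ 1/β) n]
  have hone : Tendsto (fun S : ℕ => 1 - ((S:ℝ)^κ + 1)^2 * b S) atTop (nhds 1) := by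
    simpa using tendsto_const_nhds.sub hzero
  have htoReal : Tendsto (fun S => (μ S (G S)).toReal) atTop (nhds 1) := by
    refine tendsto_of_tendsto_of_tendsto_of_le_of_le' hone tendsto_const_nhds key ?_
    filter_upwards with S
    exact stmt13_prob_toReal_le_one _
  have heq : (fun S => μ S (G S)) = fun S => ENNReal.ofReal ((μ S (G S)).toReal) :=
    funext fun S => (ENNReal.ofReal_toReal (measure_ne_top _ _)).symm
  rw [heq]
  have := ENNReal.tendsto_ofReal htoReal
  simpa using this

set_option maxHeartbeats 2000000 in
theorem stmt_13 (ρ κ Υ : ℝ)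
    (hρ : ρ ∈ Set.Ioo (0 : ℝ) 1) (hκ : κ ∈ Set.Ioo (0 : ℝ) 1)
    (hsum : 1 < ρ + κ) (h34 : 3 * ρ + 4 * κ < 4) (hΥ : 1 ≤ Υ)
    (R C : ℕ → ℕ)
    (hR : ∀ S, R S = Nat.ceil ((S : ℝ) ^ ρ)) (hC : ∀ S, C S = Nat.ceil ((S : ℝ) ^ κ))
    (Ω : ℕ → Type) [∀ S, MeasurableSpace (Ω S)]
    (μ : ∀ S, Measure (Ω S)) [∀ S, IsProbabilityMeasure (μ S)]
    (Z : ∀ S, Fin (R S) → Fin (C S) → Ω S → Bool)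
    (hmeas : ∀ (S : ℕ) (i) (j), Measurable (Z S i j))
    (hind : ∀ S, iIndepFun
      (fun (p : Fin (R S) × Fin (C S)) ω => Z S p.1 p.2 ω) (μ S))
    (P : ∀ S, Fin (R S) → Fin (C S) → ℝ)
    (hmarg : ∀ (S : ℕ) (i) (j), μ S {ω | Z S i j ω = true} = ENNReal.ofReal (P S i j))
    (hPlo : ∀ (S : ℕ) (i) (j), (S : ℝ) ^ (1 - ρ - κ) ≤ P S i j)
    (hPhi : ∀ (S : ℕ) (i) (j), P S i j ≤ Υ * (S : ℝ) ^ (1 - ρ - κ))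
    (ε : ℝ) (hε : 0 < ε) :
    Tendsto (fun S => μ S {ω | ∀ s : Fin (C S), ∀ j : Fin (C S), j ≠ s →
        (∑ i, (if Z S i j ω then (1 : ℝ) else 0) * (if Z S i s ω then (1 : ℝ) else 0))
          ≤ (Υ ^ 2 + ε) * (S : ℝ) ^ (2 - ρ - 2 * κ)})
      atTop (nhds 1) ∧
    Tendsto (fun S => μ S {ω | ∀ s : Fin (C S), ∀ j : Fin (C S), j ≠ s →
        (1 - ε) * (S : ℝ) ^ (2 - ρ - 2 * κ) ≤
          ∑ i, (if Z S i j ω then (1 : ℝ) else 0) * (if Z S i s ω then (1 : ℝ) else 0)})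
      atTop (nhds 1) := by
  obtain ⟨hρ0, hρ1⟩ := hρ
  obtain ⟨hκ0, hκ1⟩ := hκ
  have hΥ0 : (0:ℝ) < Υ := lt_of_lt_of_le one_pos hΥ
  have hΥ2 : (1:ℝ) ≤ Υ^2 := by nlinarith
  obtain ⟨ε', hε'0, hε'ε, hε'h⟩ : ∃ x : ℝ, 0 < x ∧ x ≤ ε ∧ x ≤ 1/2 :=
    ⟨min ε (1/2), lt_min hε (by norm_num), min_le_left _ _, min_le_right _ _⟩
  have hα : 0 < 2 - ρ - 2*κ := by nlinarith
  have hPnn : ∀ S i jj, 0 ≤ P S i jj := fun S i jj =>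
    le_trans (Real.rpow_nonneg (Nat.cast_nonneg S) _) (hPlo S i jj)
  have hPtr : ∀ (S:ℕ) (i) (jj), (μ S {ω | Z S i jj ω = true}).toReal = P S i jj := fun S i jj => by
    rw [hmarg S i jj, ENNReal.toReal_ofReal (hPnn S i jj)]
  have hQbounds : ∀ S : ℕ, 1 ≤ S → ∀ j s : Fin (C S),
      (S:ℝ)^(2-ρ-2*κ) ≤ (∑ i : Fin (R S),
          (μ S {ω | Z S i j ω = true}).toReal * (μ S {ω | Z S i s ω = true}).toReal) ∧
      (∑ i : Fin (R S),
          (μ S {ω | Z S i j ω = true}).toReal * (μ S {ω | Z S i s ω = true}).toReal)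
        ≤ Υ^2 * (S:ℝ)^(2-ρ-2*κ) + Υ^2 := by
    intro S hS1 j s
    have hS1' : (1:ℝ) ≤ (S:ℝ) := by exact_mod_cast hS1
    have hSpos : (0:ℝ) < (S:ℝ) := by linarith
    set L : ℝ := (S:ℝ)^(1-ρ-κ) with hLdef
    have hL0 : 0 ≤ L := Real.rpow_nonneg hSpos.le _
    have hL1 : L ≤ 1 := Real.rpow_le_one_of_one_le_of_nonpos hS1' (by linarith)
    have hsum' : ∀ i : Fin (R S), L*L ≤ P S i j * P S i s ∧ P S i j * P S i s ≤ (Υ*L)*(Υ*L) := by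
      intro i
      constructor
      · exact mul_le_mul (hPlo S i j) (hPlo S i s) hL0 (hPnn S i j)
      · exact mul_le_mul (hPhi S i j) (hPhi S i s) (hPnn S i s) (by positivity)
    have hRlo : (S:ℝ)^ρ ≤ (R S : ℝ) := by rw [hR S]; exact Nat.le_ceil _
    have hRhi : (R S : ℝ) ≤ (S:ℝ)^ρ + 1 := by
      rw [hR S]; exact le_of_lt (Nat.ceil_lt_add_one (Real.rpow_nonneg hSpos.le _))
    have hid : (S:ℝ)^ρ * (L*L) = (S:ℝ)^(2-ρ-2*κ) := by
      rw [hLdef, ← Real.rpow_add hSpos, ← Real.rpow_add hSpos]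
      congr 1
      ring
    have hQeq : (∑ i : Fin (R S),
          (μ S {ω | Z S i j ω = true}).toReal * (μ S {ω | Z S i s ω = true}).toReal)
        = ∑ i : Fin (R S), P S i j * P S i s := by
      refine Finset.sum_congr rfl fun i _ => ?_
      rw [hPtr, hPtr]
    rw [hQeq]
    constructor
    · calc (S:ℝ)^(2-ρ-2*κ) = (S:ℝ)^ρ * (L*L) := hid.symm
        _ ≤ (R S : ℝ) * (L*L) := mul_le_mul_of_nonneg_right hRlo (by positivity)
        _ = ∑ _i : Fin (R S), L*L := by rw [Finset.sum_const]; simp [nsmul_eq_mul]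
        _ ≤ ∑ i : Fin (R S), P S i j * P S i s := Finset.sum_le_sum fun i _ => (hsum' i).1
    · calc (∑ i : Fin (R S), P S i j * P S i s)
          ≤ ∑ _i : Fin (R S), (Υ*L)*(Υ*L) := Finset.sum_le_sum fun i _ => (hsum' i).2
        _ = (R S : ℝ) * ((Υ*L)*(Υ*L)) := by rw [Finset.sum_const]; simp [nsmul_eq_mul]
        _ ≤ ((S:ℝ)^ρ + 1) * ((Υ*L)*(Υ*L)) := mul_le_mul_of_nonneg_right hRhi (by positivity)
        _ = Υ^2 * ((S:ℝ)^ρ * (L*L)) + Υ^2 * (L*L) := by ring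
        _ ≤ Υ^2 * (S:ℝ)^(2-ρ-2*κ) + Υ^2 := by
            rw [hid]
            have hLL : L*L ≤ 1 := by nlinarith
            nlinarith
  have hCle : ∀ᶠ S : ℕ in atTop, (C S : ℝ) ≤ (S:ℝ)^κ + 1 := by
    filter_upwards with S
    rw [hC S]
    exact le_of_lt (Nat.ceil_lt_add_one (Real.rpow_nonneg (Nat.cast_nonneg S) _))
  constructor
  · -- upper tail
    obtain ⟨δ, hδ0, hδΥ⟩ : ∃ x : ℝ, 0 < x ∧ x * Υ^2 = ε'/2 :=
      ⟨ε'/(2*Υ^2), by positivity, by field_simp⟩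
    obtain ⟨t, ht0, ht1, hkey⟩ : ∃ x : ℝ, 0 < x ∧ x < 1 ∧ exp x - 1 ≤ x * (1+δ) := by
      refine ⟨δ/(1+δ), by positivity, ?_, ?_⟩
      · rw [div_lt_one (by linarith)]; linarith
      · have ht0' : 0 < δ/(1+δ) := by positivity
        have ht1' : δ/(1+δ) < 1 := by rw [div_lt_one (by linarith)]; linarith
        have h := stmt13_exp_ineq1 ht0'.le ht1'
        have heq2 : (δ/(1+δ)) / (1 - δ/(1+δ)) = (δ/(1+δ)) * (1+δ) := by
          have h1 : 1 - δ/(1+δ) = 1/(1+δ) := by field_simp; ring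
          rw [h1, div_eq_mul_inv, one_div, inv_inv]
        rw [heq2] at h
        exact h
    refine stmt13_union_bound_tendsto Ω μ C κ hκ1.le hCle (2-ρ-2*κ) (t*ε'/2) (exp (Υ^2*(1+δ))) hα
      (by positivity) (exp_pos _).le _
      (fun S s j => {ω | (Υ^2+ε) * (S:ℝ)^(2-ρ-2*κ) ≤
        ∑ i, (if Z S i j ω then (1:ℝ) else 0) * (if Z S i s ω then (1:ℝ) else 0)}) ?_ ?_
    · intro S ω hω
      simp only [Set.mem_setOf_eq, not_forall] at hω
      obtain ⟨s, j, hjs, hlt⟩ := hω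
      exact ⟨s, j, hjs, le_of_lt (lt_of_not_ge hlt)⟩
    · filter_upwards [eventually_ge_atTop 1] with S hS1 s j hjs
      obtain ⟨hQlo, hQhi⟩ := hQbounds S hS1 j s
      obtain ⟨Q, hQdef⟩ : ∃ x : ℝ, x = ∑ i : Fin (R S),
        (μ S {ω | Z S i j ω = true}).toReal * (μ S {ω | Z S i s ω = true}).toReal := ⟨_, rfl⟩
      obtain ⟨m, hmdef⟩ : ∃ x : ℝ, x = (S:ℝ)^(2-ρ-2*κ) := ⟨_, rfl⟩
      rw [← hmdef] at hQlo hQhi ⊢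
      rw [← hQdef] at hQlo hQhi
      have hm0 : 0 ≤ m := hmdef ▸ Real.rpow_nonneg (Nat.cast_nonneg S) _
      have hbd := stmt13_pair_upper (μ := μ S) (Z S) (hmeas S) (hind S) j s hjs t
        ((Υ^2+ε)*m) ht0.le
      rw [← hQdef] at hbd
      refine hbd.trans ?_
      rw [← Real.exp_add]
      apply Real.exp_le_exp.mpr
      have hx0 : 0 ≤ exp t - 1 := by linarith [Real.add_one_le_exp t]
      have s1 : Q * (exp t - 1) ≤ (Υ^2*m + Υ^2) * (exp t - 1) :=
        mul_le_mul_of_nonneg_right hQhi hx0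
      have s2 : (Υ^2*m + Υ^2) * (exp t - 1) ≤ (Υ^2*m + Υ^2) * (t*(1+δ)) :=
        mul_le_mul_of_nonneg_left hkey (by positivity)
      have s3 : t*((Υ^2+ε')*m) ≤ t*((Υ^2+ε)*m) := by
        nlinarith [mul_nonneg (mul_nonneg ht0.le hm0) (sub_nonneg.mpr hε'ε)]
      have s4 : (Υ^2*m + Υ^2)*(t*(1+δ)) = t*((Υ^2+ε')*m) - t*ε'/2*m + t*(Υ^2*(1+δ)) := by
        linear_combination (t*m) * hδΥ
      have s5 : t*(Υ^2*(1+δ)) ≤ Υ^2*(1+δ) := by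
        nlinarith [mul_nonneg (sub_nonneg.mpr ht1.le) (by positivity : (0:ℝ) ≤ Υ^2*(1+δ))]
      linarith
  · -- lower tail
    obtain ⟨u, hudef⟩ : ∃ x : ℝ, x = ε'/2 := ⟨_, rfl⟩
    have hu0 : 0 < u := by rw [hudef]; positivity
    refine stmt13_union_bound_tendsto Ω μ C κ hκ1.le hCle (2-ρ-2*κ) (ε'^2/4) 1 hα
      (by positivity) zero_le_one _
      (fun S s j => {ω |
        (∑ i, (if Z S i j ω then (1:ℝ) else 0) * (if Z S i s ω then (1:ℝ) else 0))
          ≤ (1-ε) * (S:ℝ)^(2-ρ-2*κ)}) ?_ ?_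
    · intro S ω hω
      simp only [Set.mem_setOf_eq, not_forall] at hω
      obtain ⟨s, j, hjs, hlt⟩ := hω
      exact ⟨s, j, hjs, le_of_not_ge hlt⟩
    · filter_upwards [eventually_ge_atTop 1] with S hS1 s j hjs
      obtain ⟨hQlo, hQhi⟩ := hQbounds S hS1 j s
      obtain ⟨Q, hQdef⟩ : ∃ x : ℝ, x = ∑ i : Fin (R S),
        (μ S {ω | Z S i j ω = true}).toReal * (μ S {ω | Z S i s ω = true}).toReal := ⟨_, rfl⟩
      obtain ⟨m, hmdef⟩ : ∃ x : ℝ, x = (S:ℝ)^(2-ρ-2*κ) := ⟨_, rfl⟩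
      rw [← hmdef] at hQlo hQhi ⊢
      rw [← hQdef] at hQlo hQhi
      have hm0 : 0 ≤ m := hmdef ▸ Real.rpow_nonneg (Nat.cast_nonneg S) _
      have hbd := stmt13_pair_lower (μ := μ S) (Z S) (hmeas S) (hind S) j s hjs (-u)
        ((1-ε)*m) (by linarith)
      rw [← hQdef] at hbd
      refine hbd.trans ?_
      rw [one_mul]
      apply Real.exp_le_exp.mpr
      have hxneg : exp (-u) - 1 ≤ 0 := by
        have : exp (-u) ≤ exp 0 := Real.exp_le_exp.mpr (by linarith)
        simpa using this
      have hx := stmt13_exp_ineq2 hu0.le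
      have s1 : Q * (exp (-u) - 1) ≤ m * (exp (-u) - 1) :=
        mul_le_mul_of_nonpos_right hQlo hxneg
      have s2 : m * (exp (-u) - 1) ≤ m * (-u + u^2) := mul_le_mul_of_nonneg_left hx hm0
      have s3 : u*((1-ε)*m) ≤ u*((1-ε')*m) := by
        nlinarith [mul_nonneg (mul_nonneg hu0.le hm0) (sub_nonneg.mpr hε'ε)]
      have s4 : u*((1-ε')*m) + m*(-u + u^2) = -(ε'^2/4*m) := by
        rw [hudef]; ring
      linarith
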